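/- Let θ ∈ (-1,1), k ≥ 2, 1 ≤ q ≤ k-1 be integers, and f_θ(h) = arctanh(θ·tanh h). If |θ| ≤ 1/√(qk), then the only real solution of the system h₁ = q·f_θ(h₂), h₂ = k·f_θ(h₁) is (h₁,h₂) = (0,0). -/

import Mathlib

/-- The real inverse hyperbolic tangent, `arctanh x = (1/2) ln((1+x)/(1-x))`. -/
noncomputable def arctanh (x : ℝ) : ℝ := (1 / 2) * Real.log ((1 + x) / (1 - x))

/-- The Ising compatibility function `f_θ(h) = arctanh(θ · tanh h)`. -/
noncomputable def fIsing (θ h : ℝ) : ℝ := arctanh (θ * Real.tanh h)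

lemma hasDerivAt_tanh' (x : ℝ) : HasDerivAt Real.tanh (1 / Real.cosh x ^ 2) x := by
  have h := (Real.hasDerivAt_sinh x).div (Real.hasDerivAt_cosh x) (Real.cosh_pos x).ne'
  have hfun : Real.tanh = fun y => Real.sinh y / Real.cosh y := funext fun y => Real.tanh_eq_sinh_div_cosh y
  rw [hfun]
  convert h using 1
  case e'_4 => rfl
  case e'_5 => rfl
  case e'_8 => rfl
  have h1 := Real.cosh_sq_sub_sinh_sq x
  rw [← h1]
  ring

lemma tanh_lt_one' (x : ℝ) : Real.tanh x < 1 := by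
  rw [Real.tanh_eq_sinh_div_cosh, div_lt_one (Real.cosh_pos x)]
  nlinarith [Real.cosh_sub_sinh x, Real.exp_pos (-x)]

lemma neg_one_lt_tanh (x : ℝ) : -1 < Real.tanh x := by
  rw [Real.tanh_eq_sinh_div_cosh, lt_div_iff₀ (Real.cosh_pos x)]
  nlinarith [Real.cosh_add_sinh x, Real.exp_pos x]

lemma tanh_pos_of_pos {x : ℝ} (hx : 0 < x) : 0 < Real.tanh x := by
  rw [Real.tanh_eq_sinh_div_cosh]
  exact div_pos (by rwa [Real.sinh_pos_iff]) (Real.cosh_pos x)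

lemma arctanh_zero : arctanh 0 = 0 := by simp [arctanh]

lemma fIsing_zero (θ : ℝ) : fIsing θ 0 = 0 := by simp [fIsing, arctanh]

lemma arctanh_neg (x : ℝ) : arctanh (-x) = - arctanh x := by
  unfold arctanh
  rw [show (1 + -x) / (1 - -x) = ((1 + x) / (1 - x))⁻¹ by rw [inv_div]; ring_nf, Real.log_inv]
  ring

lemma fIsing_neg (θ x : ℝ) : fIsing θ (-x) = - fIsing θ x := by
  rw [fIsing, Real.tanh_neg, mul_neg, arctanh_neg, fIsing]

lemma fIsing_neg_theta (θ x : ℝ) : fIsing (-θ) x = - fIsing θ x := by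
  rw [fIsing, neg_mul, arctanh_neg, fIsing]

lemma fIsing_lt_of_pos {θ : ℝ} (h0 : 0 < θ) (h1 : θ < 1) {x : ℝ} (hx : 0 < x) :
    fIsing θ x < θ * x := by
  have habs : ∀ y : ℝ, -1 < θ * Real.tanh y ∧ θ * Real.tanh y < 1 := by
    intro y
    constructor <;> nlinarith [tanh_lt_one' y, neg_one_lt_tanh y]
  have hfun : ∀ y : ℝ, fIsing θ y =
      (1/2) * (Real.log (1 + θ * Real.tanh y) - Real.log (1 - θ * Real.tanh y)) := by
    intro y
    obtain ⟨ha, hb⟩ := habs y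
    rw [fIsing, arctanh, Real.log_div (by linarith) (by linarith)]
  -- derivative of F = θ*x - fIsing θ x
  have hder : ∀ y : ℝ, HasDerivAt (fun z => θ * z - fIsing θ z)
      (θ - (1/2) * (θ * (1 / Real.cosh y ^ 2) / (1 + θ * Real.tanh y) -
        (-(θ * (1 / Real.cosh y ^ 2))) / (1 - θ * Real.tanh y))) y := by
    intro y
    obtain ⟨ha, hb⟩ := habs y
    have ht := hasDerivAt_tanh' y
    have h1' : HasDerivAt (fun z => 1 + θ * Real.tanh z) (θ * (1 / Real.cosh y ^ 2)) y :=
      ((ht.const_mul θ).const_add 1)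
    have h2' : HasDerivAt (fun z => 1 - θ * Real.tanh z) (-(θ * (1 / Real.cosh y ^ 2))) y :=
      ((ht.const_mul θ).const_sub 1)
    have hl1 := h1'.log (by linarith)
    have hl2 := h2'.log (by linarith)
    have hF : HasDerivAt (fun z => (1/2) * (Real.log (1 + θ * Real.tanh z) -
        Real.log (1 - θ * Real.tanh z)))
        ((1/2) * (θ * (1 / Real.cosh y ^ 2) / (1 + θ * Real.tanh y) -
        (-(θ * (1 / Real.cosh y ^ 2))) / (1 - θ * Real.tanh y))) y := (hl1.sub hl2).const_mul (1/2)
    have hid : HasDerivAt (fun z : ℝ => θ * z) θ y := by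
      simpa using (hasDerivAt_id y).const_mul θ
    have := hid.sub hF
    refine this.congr_of_eventuallyEq ?_
    filter_upwards with z using by rw [hfun z]; rfl
  have hmono : StrictMonoOn (fun z => θ * z - fIsing θ z) (Set.Ici (0:ℝ)) := by
    apply strictMonoOn_of_deriv_pos (convex_Ici 0)
    · exact fun y _ => ((hder y).differentiableAt).continuousAt.continuousWithinAt
    · intro y hy
      rw [interior_Ici] at hy
      rw [(hder y).deriv]
      obtain ⟨ha, hb⟩ := habs y
      have hc := Real.cosh_pos y
      have hts : Real.tanh y ^ 2 = Real.sinh y ^ 2 / Real.cosh y ^ 2 := by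
        rw [Real.tanh_eq_sinh_div_cosh, div_pow]
      have hcs := Real.cosh_sq_sub_sinh_sq y
      have htp := tanh_pos_of_pos hy
      have key : 1 / Real.cosh y ^ 2 < 1 - (θ * Real.tanh y)^2 := by
        have h1t : 1 - Real.tanh y ^ 2 = 1 / Real.cosh y ^ 2 := by
          rw [hts]; field_simp; exact hcs
        nlinarith [mul_pos htp htp, mul_pos (by linarith : (0:ℝ) < 1 - θ) (by linarith : (0:ℝ) < 1 + θ)]
      have hu : 0 < 1 / Real.cosh y ^ 2 := by positivity
      set t := Real.tanh y
      set u := 1 / Real.cosh y ^ 2 with hu_def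
      have ha' : (0:ℝ) < 1 + θ * t := by linarith
      have hb' : (0:ℝ) < 1 - θ * t := by linarith
      have hab : (0:ℝ) < (1 + θ * t) * (1 - θ * t) := mul_pos ha' hb'
      have e : θ * u / (1 + θ * t) - (-(θ * u)) / (1 - θ * t)
          = θ * u * 2 / ((1 + θ * t) * (1 - θ * t)) := by
        field_simp
        ring
      rw [e]
      have hlt : θ * u * 2 / ((1 + θ * t) * (1 - θ * t)) < 2 * θ := by
        rw [div_lt_iff₀ hab]
        nlinarith [key, hu]
      linarith
  have h0f : (fun z => θ * z - fIsing θ z) 0 = 0 := by simp [fIsing_zero]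
  have := hmono (Set.self_mem_Ici) (Set.mem_Ici.2 hx.le) hx
  simp only [h0f] at this ⊢
  linarith [this]

lemma fIsing_zero_theta (x : ℝ) : fIsing 0 x = 0 := by simp [fIsing, arctanh]

lemma fIsing_pos_of_pos {θ : ℝ} (h0 : 0 < θ) (h1 : θ < 1) {x : ℝ} (hx : 0 < x) :
    0 < fIsing θ x := by
  have ht := tanh_pos_of_pos hx
  have ht1 := tanh_lt_one' x
  have hs0 : 0 < θ * Real.tanh x := mul_pos h0 ht
  have hs1 : θ * Real.tanh x < 1 := by nlinarith
  rw [fIsing, arctanh]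
  have : (1:ℝ) < (1 + θ * Real.tanh x) / (1 - θ * Real.tanh x) := by
    rw [lt_div_iff₀ (by linarith)]
    linarith
  have := Real.log_pos this
  linarith

lemma abs_fIsing_lt {θ : ℝ} (hθ : θ ∈ Set.Ioo (-1:ℝ) 1) (hθ0 : θ ≠ 0) {x : ℝ}
    (hx0 : x ≠ 0) : |fIsing θ x| < |θ| * |x| := by
  have hθa : 0 < |θ| := abs_pos.2 hθ0
  have hθb : |θ| < 1 := abs_lt.2 ⟨hθ.1, hθ.2⟩
  have hxa : 0 < |x| := abs_pos.2 hx0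
  have hpos : 0 < fIsing |θ| |x| := fIsing_pos_of_pos hθa hθb hxa
  have heq2 : |fIsing θ x| = |fIsing (|θ|) (|x|)| := by
    rcases abs_cases θ with ⟨h1, _⟩ | ⟨h1, _⟩ <;> rcases abs_cases x with ⟨g1, _⟩ | ⟨g1, _⟩ <;>
      rw [h1, g1] <;> simp [fIsing_neg, fIsing_neg_theta, abs_neg]
  rw [heq2, abs_of_pos hpos]
  exact fIsing_lt_of_pos hθa hθb hxa

/-- If `|θ| ≤ 1/√(qk)`, the only solution of `h₁ = q f_θ(h₂)`, `h₂ = k f_θ(h₁)` is `(0,0)`. -/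
theorem alt_unique_solution (θ : ℝ) (hθ : θ ∈ Set.Ioo (-1 : ℝ) 1)
    (k q : ℕ) (hk : 2 ≤ k) (hq1 : 1 ≤ q) (hqk : q ≤ k - 1)
    (hθc : |θ| ≤ 1 / Real.sqrt (q * k))
    (h₁ h₂ : ℝ)
    (e1 : h₁ = q * fIsing θ h₂) (e2 : h₂ = k * fIsing θ h₁) :
    h₁ = 0 ∧ h₂ = 0 := by
  by_cases hθz : θ = 0
  · subst hθz
    rw [fIsing_zero_theta] at e1 e2
    constructor <;> [rw [e1]; rw [e2]] <;> ring
  by_cases h1z : h₁ = 0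
  · refine ⟨h1z, ?_⟩
    rw [e2, h1z, fIsing_zero]; ring
  exfalso
  have h2z : h₂ ≠ 0 := by
    intro h
    exact h1z (by rw [e1, h, fIsing_zero]; ring)
  have hq' : (1:ℝ) ≤ (q:ℝ) := by exact_mod_cast hq1
  have hk' : (2:ℝ) ≤ (k:ℝ) := by exact_mod_cast hk
  have hθa : 0 < |θ| := abs_pos.2 hθz
  have A : |h₁| < (q:ℝ) * (|θ| * |h₂|) := by
    rw [e1, abs_mul, Nat.abs_cast]
    exact mul_lt_mul_of_pos_left (abs_fIsing_lt hθ hθz h2z) (by linarith)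
  have B : |h₂| < (k:ℝ) * (|θ| * |h₁|) := by
    rw [e2, abs_mul, Nat.abs_cast]
    exact mul_lt_mul_of_pos_left (abs_fIsing_lt hθ hθz h1z) (by linarith)
  have hqk0 : (0:ℝ) ≤ (q:ℝ) * (k:ℝ) := by positivity
  have hs : Real.sqrt ((q:ℝ) * (k:ℝ)) ^ 2 = (q:ℝ) * (k:ℝ) := Real.sq_sqrt hqk0
  have hs0 : 0 < Real.sqrt ((q:ℝ) * (k:ℝ)) := Real.sqrt_pos.2 (by nlinarith)
  have hθs : |θ| * Real.sqrt ((q:ℝ) * (k:ℝ)) ≤ 1 := by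
    have := hθc
    push_cast at this
    rw [le_div_iff₀ hs0] at this
    exact this
  have hθ2 : θ ^ 2 * ((q:ℝ) * (k:ℝ)) ≤ 1 := by
    have h1 := sq_abs θ
    have h2 := mul_le_mul hθs hθs (mul_nonneg (abs_nonneg θ) hs0.le) zero_le_one
    nlinarith [h2, hs]
  have C := mul_lt_mul_of_pos_left B (mul_pos (by linarith : (0:ℝ) < (q:ℝ)) hθa)
  have D := mul_le_mul_of_nonneg_right hθ2 (abs_nonneg h₁)
  have E : (q:ℝ) * |θ| * ((k:ℝ) * (|θ| * |h₁|)) = θ ^ 2 * ((q:ℝ) * (k:ℝ)) * |h₁| := by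
    rw [← sq_abs θ]; ring
  nlinarith [A, C, D, E]
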